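/- Let X and Y be compact Hausdorff smooth manifolds without boundary modeled on finite-dimensional Euclidean spaces, and let Ψ : C^∞(X, ℝ) → C^∞(Y, ℝ) be an ℝ-algebra isomorphism. For every finite list D₁, …, D_k of ℝ-linear derivations of C^∞(Y, ℝ) and every f ∈ C^∞(X, ℝ), the seminorm identity ‖D₁(D₂(⋯ D_k(Ψ(f))⋯))‖_∞ = ‖Ψ*(D₁)(Ψ*(D₂)(⋯ Ψ*(D_k)(f)⋯))‖_∞ holds, where Ψ*(D)(g) = Ψ⁻¹(D(Ψ(g))) denotes the pullback derivation. -/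

import Mathlib

open Manifold

section Aux

variable {k : ℕ} {M : Type*} [TopologicalSpace M] [ChartedSpace (EuclideanSpace ℝ (Fin k)) M]
  [IsManifold (𝓡 k) (⊤ : ℕ∞) M]

theorem aux_isUnit_iff (g : C^(⊤ : ℕ∞)⟮𝓡 k, M; ℝ⟯) :
    IsUnit g ↔ ∀ x, g x ≠ 0 := by
  constructor
  · rintro ⟨u, rfl⟩ x h
    have : (u.val * u.inv) x = 1 := by rw [u.val_inv]; rfl
    have hm : (u.val * u.inv) x = u.val x * u.inv x := rfl
    rw [hm, h, zero_mul] at this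
    simp at this
  · intro h
    refine ⟨⟨g, ⟨fun x => (g x)⁻¹, g.contMDiff.inv₀ h⟩, ?_, ?_⟩, rfl⟩
    · ext x
      exact mul_inv_cancel₀ (h x)
    · ext x
      exact inv_mul_cancel₀ (h x)

theorem aux_spectrum_eq (g : C^(⊤ : ℕ∞)⟮𝓡 k, M; ℝ⟯) :
    spectrum ℝ g = Set.range ⇑g := by
  ext c
  rw [spectrum.mem_iff]
  rw [aux_isUnit_iff]
  simp only [not_forall, not_not]
  constructor
  · rintro ⟨x, hx⟩
    have : c - g x = 0 := hx
    exact ⟨x, by linarith⟩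
  · rintro ⟨x, rfl⟩
    exact ⟨x, sub_self (g x)⟩

theorem aux_norm_eq [CompactSpace M] (g : C^(⊤ : ℕ∞)⟮𝓡 k, M; ℝ⟯) :
    ‖(⟨⇑g, g.contMDiff.continuous⟩ : C(M, ℝ))‖ = sSup (norm '' Set.range ⇑g) := by
  rw [ContinuousMap.norm_eq_iSup_norm]
  rw [iSup, ← Set.range_comp]
  rfl

end Aux

/-- For compact Hausdorff smooth manifolds `X`, `Y` without boundary modeled on
finite-dimensional Euclidean spaces, an `ℝ`-algebra isomorphism
`Ψ : C^∞(X, ℝ) → C^∞(Y, ℝ)`, a finite list `D₁, …, D_k` of `ℝ`-linear derivations of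
`C^∞(Y, ℝ)` and any `f ∈ C^∞(X, ℝ)`, the seminorm identity
`‖D₁(D₂(⋯ D_k(Ψ f)⋯))‖_∞ = ‖Ψ*(D₁)(Ψ*(D₂)(⋯ Ψ*(D_k) f⋯))‖_∞` holds, where
`Ψ*(D)(g) = Ψ⁻¹(D(Ψ g))` is the pullback derivation and `‖·‖_∞` is the supremum norm
of the underlying continuous map. -/
theorem algEquiv_smooth_functions_seminorm_identity
    {n m : ℕ}
    {X : Type*} [TopologicalSpace X] [ChartedSpace (EuclideanSpace ℝ (Fin n)) X]
    [IsManifold (𝓡 n) (⊤ : ℕ∞) X] [T2Space X] [CompactSpace X]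
    {Y : Type*} [TopologicalSpace Y] [ChartedSpace (EuclideanSpace ℝ (Fin m)) Y]
    [IsManifold (𝓡 m) (⊤ : ℕ∞) Y] [T2Space Y] [CompactSpace Y]
    (Ψ : C^(⊤ : ℕ∞)⟮𝓡 n, X; ℝ⟯ ≃ₐ[ℝ] C^(⊤ : ℕ∞)⟮𝓡 m, Y; ℝ⟯)
    (Ds : List (Derivation ℝ C^(⊤ : ℕ∞)⟮𝓡 m, Y; ℝ⟯ C^(⊤ : ℕ∞)⟮𝓡 m, Y; ℝ⟯))
    (f : C^(⊤ : ℕ∞)⟮𝓡 n, X; ℝ⟯) :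
    (let u : C^(⊤ : ℕ∞)⟮𝓡 m, Y; ℝ⟯ := Ds.foldr (fun D g => D g) (Ψ f)
     let v : C^(⊤ : ℕ∞)⟮𝓡 n, X; ℝ⟯ := Ds.foldr (fun D g => Ψ.symm (D (Ψ g))) f
     ‖(⟨⇑u, u.contMDiff.continuous⟩ : C(Y, ℝ))‖ =
       ‖(⟨⇑v, v.contMDiff.continuous⟩ : C(X, ℝ))‖) := by
  intro u v
  have key : u = Ψ v := by
    show Ds.foldr (fun D g => D g) (Ψ f) = Ψ (Ds.foldr (fun D g => Ψ.symm (D (Ψ g))) f)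
    induction Ds with
    | nil => rfl
    | cons D Ds ih =>
      simp only [List.foldr_cons, ih, AlgEquiv.apply_symm_apply]
  rw [key, aux_norm_eq, aux_norm_eq, ← aux_spectrum_eq, ← aux_spectrum_eq,
    AlgEquiv.spectrum_eq]
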